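/- Let ‖·‖ be a norm on ℝⁿ with unit ball whose polar is B*, and let A : ℝⁿ → ℝ^{n'} be a surjective linear map with Moore-Penrose pseudoinverse A†. Then the factor-norm ‖y‖' = min{‖x‖ : Ax = y} on ℝ^{n'} satisfies ‖y‖' = max{((A†)ᵀ z)ᵀ y : z ∈ B* ∩ Im(Aᵀ)}; in particular the polar of the unit ball of ‖·‖' is the linear image of B* ∩ Im(Aᵀ) under (A†)ᵀ. -/

import Mathlib

open Matrix Set

/-- For a norm `‖·‖` on `ℝⁿ` with polar `B*` of its unit ball and a surjective linear map
`A : ℝⁿ → ℝ^{n'}` with Moore–Penrose pseudoinverse `A†`, the factor-norm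
`‖y‖' = min{‖x‖ : Ax = y}` satisfies `‖y‖' = max{((A†)ᵀ z)ᵀ y : z ∈ B* ∩ Im Aᵀ}`. -/
theorem stmt5 {n n' : ℕ}
    (nrm : (Fin n → ℝ) → ℝ)
    (h0 : ∀ x, 0 ≤ nrm x) (hdef : ∀ x, nrm x = 0 → x = 0)
    (hh : ∀ (c : ℝ) x, nrm (c • x) = |c| * nrm x)
    (htri : ∀ x y, nrm (x + y) ≤ nrm x + nrm y)
    (Bstar : Set (Fin n → ℝ))
    (hBstar : Bstar = {z | ∀ x, nrm x ≤ 1 → z ⬝ᵥ x ≤ 1})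
    (A : Matrix (Fin n') (Fin n) ℝ)
    (hsurj : ∀ y : Fin n' → ℝ, ∃ x, A *ᵥ x = y)
    (Adag : Matrix (Fin n) (Fin n') ℝ)
    (hMP1 : A * Adag * A = A) (hMP2 : Adag * A * Adag = Adag)
    (hMP3 : (A * Adag)ᵀ = A * Adag) (hMP4 : (Adag * A)ᵀ = Adag * A) :
    ∀ y : Fin n' → ℝ,
      sInf {r | ∃ x, A *ᵥ x = y ∧ r = nrm x} =
        sSup {r | ∃ z ∈ Bstar, (∃ u, Aᵀ *ᵥ u = z) ∧ r = (Adagᵀ *ᵥ z) ⬝ᵥ y} := by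
  -- the factor "norm"
  set S : (Fin n' → ℝ) → Set ℝ := fun w => {r | ∃ x, A *ᵥ x = w ∧ r = nrm x} with hSdef
  set ν : (Fin n' → ℝ) → ℝ := fun w => sInf (S w) with hνdef
  have hne : ∀ w, (S w).Nonempty := by
    intro w; obtain ⟨x, hx⟩ := hsurj w; exact ⟨nrm x, x, hx, rfl⟩
  have hbdd : ∀ w, BddBelow (S w) := by
    rintro w; exact ⟨0, by rintro r ⟨x, -, rfl⟩; exact h0 x⟩
  have hν0 : ∀ w, 0 ≤ ν w := by
    intro w
    exact le_csInf (hne w) (by rintro r ⟨x, -, rfl⟩; exact h0 x)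
  have hνle : ∀ x, ν (A *ᵥ x) ≤ nrm x := fun x => csInf_le (hbdd _) ⟨x, rfl, rfl⟩
  have hnrm0 : nrm 0 = 0 := by
    have := hh 0 0
    simpa using this
  have hν00 : ν 0 = 0 := by
    refine le_antisymm ?_ (hν0 0)
    have := hνle 0
    rwa [mulVec_zero, hnrm0] at this
  -- subadditivity
  have hadd : ∀ u v, ν (u + v) ≤ ν u + ν v := by
    intro u v
    have key : ∀ a ∈ S u, ∀ b ∈ S v, ν (u + v) ≤ a + b := by
      rintro a ⟨x1, hx1, rfl⟩ b ⟨x2, hx2, rfl⟩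
      calc ν (u + v) ≤ nrm (x1 + x2) := by
            have : A *ᵥ (x1 + x2) = u + v := by rw [mulVec_add, hx1, hx2]
            simpa [this] using hνle (x1 + x2)
        _ ≤ nrm x1 + nrm x2 := htri x1 x2
    have h1 : ∀ a ∈ S u, ν (u + v) - a ≤ ν v := by
      intro a ha
      refine le_csInf (hne v) fun b hb => ?_
      linarith [key a ha b hb]
    have : ν (u + v) - ν v ≤ ν u := by
      refine le_csInf (hne u) fun a ha => ?_
      linarith [h1 a ha]
    linarith
  -- positive homogeneity
  have hsmul_le : ∀ c : ℝ, 0 < c → ∀ w, ν (c • w) ≤ c * ν w := by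
    intro c hc w
    have key : ∀ a ∈ S w, ν (c • w) ≤ c * a := by
      rintro a ⟨x, hx, rfl⟩
      have hAx : A *ᵥ (c • x) = c • w := by rw [mulVec_smul, hx]
      have := hνle (c • x)
      rwa [hAx, hh c x, abs_of_pos hc] at this
    have : ν (c • w) / c ≤ ν w := by
      refine le_csInf (hne w) fun a ha => ?_
      rw [div_le_iff₀' hc]
      exact key a ha
    calc ν (c • w) = c * (ν (c • w) / c) := by field_simp
      _ ≤ c * ν w := by nlinarith [hν0 (c • w)]
  have hsmul : ∀ c : ℝ, 0 < c → ∀ w, ν (c • w) = c * ν w := by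
    intro c hc w
    refine le_antisymm (hsmul_le c hc w) ?_
    have := hsmul_le c⁻¹ (by positivity) (c • w)
    rw [smul_smul, inv_mul_cancel₀ hc.ne', one_smul] at this
    calc c * ν w ≤ c * (c⁻¹ * ν (c • w)) := by
          exact mul_le_mul_of_nonneg_left this hc.le
      _ = ν (c • w) := by field_simp
  -- A ∘ A† = id (using surjectivity)
  have hAAdag : ∀ w, A *ᵥ (Adag *ᵥ w) = w := by
    intro w
    obtain ⟨x, hx⟩ := hsurj w
    calc A *ᵥ (Adag *ᵥ w) = A *ᵥ (Adag *ᵥ (A *ᵥ x)) := by rw [hx]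
      _ = (A * Adag * A) *ᵥ x := by rw [mulVec_mulVec, mulVec_mulVec]
      _ = A *ᵥ x := by rw [hMP1]
      _ = w := hx
  -- elements of B* are subdual to nrm
  have hzle : ∀ z ∈ Bstar, ∀ x, z ⬝ᵥ x ≤ nrm x := by
    intro z hz x
    rw [hBstar] at hz
    rcases eq_or_lt_of_le (h0 x) with h | h
    · have : x = 0 := hdef x h.symm
      simp [this, hnrm0]
    · have h1 : nrm ((nrm x)⁻¹ • x) ≤ 1 := by
        rw [hh, abs_of_pos (by positivity), inv_mul_cancel₀ h.ne']
      have h2 := hz _ h1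
      rw [dotProduct_smul, smul_eq_mul] at h2
      calc z ⬝ᵥ x = nrm x * ((nrm x)⁻¹ * (z ⬝ᵥ x)) := by field_simp
        _ ≤ nrm x * 1 := mul_le_mul_of_nonneg_left h2 (h0 x)
        _ = nrm x := mul_one _
    -- every element of RHS set is ≤ ν y
  intro y
  have hub : ∀ r ∈ {r | ∃ z ∈ Bstar, (∃ u, Aᵀ *ᵥ u = z) ∧ r = (Adagᵀ *ᵥ z) ⬝ᵥ y}, r ≤ ν y := by
    rintro r ⟨z, hz, ⟨u, hu⟩, rfl⟩
    refine le_csInf (hne y) ?_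
    rintro a ⟨x, hx, rfl⟩
    have h1 : (Adagᵀ *ᵥ z) ⬝ᵥ y = z ⬝ᵥ (Adag *ᵥ y) := by
      rw [mulVec_transpose, ← dotProduct_mulVec]
    have h2 : z ⬝ᵥ (Adag *ᵥ y) = u ⬝ᵥ (A *ᵥ (Adag *ᵥ y)) := by
      rw [← hu, mulVec_transpose, ← dotProduct_mulVec]
    have h3 : z ⬝ᵥ x = u ⬝ᵥ y := by
      rw [← hu, mulVec_transpose, ← dotProduct_mulVec, hx]
    rw [h1, h2, hAAdag, ← h3]
    exact hzle z hz x
  -- produce an element of the RHS set with value ν y (Hahn–Banach)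
  have hmem : ν y ∈ {r | ∃ z ∈ Bstar, (∃ u, Aᵀ *ᵥ u = z) ∧ r = (Adagᵀ *ᵥ z) ⬝ᵥ y} := by
    have hg : ∃ g : (Fin n' → ℝ) →ₗ[ℝ] ℝ, g y = ν y ∧ ∀ w, g w ≤ ν w := by
      rcases eq_or_ne y 0 with rfl | hy
      · exact ⟨0, by simp [hν00], fun w => by simpa using hν0 w⟩
      · have hle : ∀ x : (LinearPMap.mkSpanSingleton (K := ℝ) (L := ℝ) (σ := RingHom.id ℝ) y (ν y) hy).domain,
            LinearPMap.mkSpanSingleton (K := ℝ) (L := ℝ) (σ := RingHom.id ℝ) y (ν y) hy x ≤ ν x := by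
          rintro ⟨w, hw⟩
          obtain ⟨c, rfl⟩ := Submodule.mem_span_singleton.mp hw
          have happ : LinearPMap.mkSpanSingleton (K := ℝ) (L := ℝ) (σ := RingHom.id ℝ) y (ν y) hy ⟨c • y, hw⟩ = c * ν y := by
            have := LinearPMap.mkSpanSingleton'_apply y (ν y)
              (fun c hc => by simp [smul_eq_mul, hy, smul_eq_zero] at hc ⊢; tauto) c hw
            simpa using this
          rw [happ]
          show c * ν y ≤ ν (c • y)
          rcases lt_trichotomy c 0 with hc | rfl | hc
          · calc c * ν y ≤ 0 := mul_nonpos_of_nonpos_of_nonneg hc.le (hν0 y)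
              _ ≤ ν (c • y) := hν0 _
          · simpa using hν0 0
          · rw [hsmul c hc y]
        obtain ⟨g, hg1, hg2⟩ := exists_extension_of_le_sublinear
          (LinearPMap.mkSpanSingleton (K := ℝ) (L := ℝ) (σ := RingHom.id ℝ) y (ν y) hy) ν (fun c hc w => hsmul c hc w)
          hadd hle
        refine ⟨g, ?_, hg2⟩
        have := hg1 ⟨y, Submodule.mem_span_singleton_self y⟩
        rwa [LinearPMap.mkSpanSingleton_apply ℝ] at this
    obtain ⟨g, hgy, hgle⟩ := hg
    set u : Fin n' → ℝ := fun i => g (fun j => if i = j then (1:ℝ) else 0) with hudef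
    have hgu : ∀ w, u ⬝ᵥ w = g w := by
      intro w
      rw [pi_eq_sum_univ w, map_sum]
      simp [dotProduct, hudef, mul_comm]
    refine ⟨Aᵀ *ᵥ u, ?_, ⟨u, rfl⟩, ?_⟩
    · rw [hBstar]
      intro x hx
      have h1 : (Aᵀ *ᵥ u) ⬝ᵥ x = u ⬝ᵥ (A *ᵥ x) := by
        rw [mulVec_transpose, ← dotProduct_mulVec]
      rw [h1, hgu]
      calc g (A *ᵥ x) ≤ ν (A *ᵥ x) := hgle _
        _ ≤ nrm x := hνle x
        _ ≤ 1 := hx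
    · have h1 : (Adagᵀ *ᵥ (Aᵀ *ᵥ u)) ⬝ᵥ y = (Aᵀ *ᵥ u) ⬝ᵥ (Adag *ᵥ y) := by
        rw [mulVec_transpose Adag, ← dotProduct_mulVec]
      have h2 : (Aᵀ *ᵥ u) ⬝ᵥ (Adag *ᵥ y) = u ⬝ᵥ (A *ᵥ (Adag *ᵥ y)) := by
        rw [mulVec_transpose A, ← dotProduct_mulVec]
      rw [h1, h2, hAAdag, hgu, hgy]
  refine le_antisymm ?_ ?_
  · exact le_csSup ⟨ν y, hub⟩ hmem
  · exact csSup_le ⟨ν y, hmem⟩ hub
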